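/- arXiv:1007.3815 — 5 statements merged into one kernel-verified Lean document; each statement's English description precedes it below -/
import Mathlib

section
/- For any real L > 1 and any point x ∈ ℝ^{Nd}, there exist an integer K with K ≤ N^N and points x^{(1)}, …, x^{(K)} ∈ ℝ^{Nd} such that: for every lattice point y ∈ ℤ^{Nd} lying outside the union ∪_{l=1}^{K} Λ_{2N(L+r₁)}(x^{(l)}) and satisfying dist(Λ_L(x), Λ_L(y)) > 2N(L+r₁), the pair of cubes Λ_L(x), Λ_L(y) is separable. -/
open Set Metric

/-- The open cube (max-norm ball) of radius `L` centered at `u` in `ℝ^{Nd} ≅ (ℝ^d)^N`,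
equipped with the max-norm (the sup-norm on the Pi type). -/
def cube {N d : ℕ} (L : ℝ) (u : Fin N → Fin d → ℝ) : Set (Fin N → Fin d → ℝ) :=
  Metric.ball u L

/-- `Λ_L(y)` is `J`-separable from `Λ_L(x)`:
`(∪_{j∈J} Π_j Λ_{L+r₁}(y)) ∩ [(∪_{i∉J} Π_i Λ_{L+r₁}(y)) ∪ (∪_{i=1}^N Π_i Λ_{L+r₁}(x))] = ∅`. -/
def JSeparable {N d : ℕ} (r₁ L : ℝ) (J : Finset (Fin N))
    (x y : Fin N → Fin d → ℝ) : Prop :=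
  (⋃ j ∈ J, (fun z : Fin N → Fin d → ℝ => z j) '' cube (L + r₁) y) ∩
    ((⋃ i ∈ (J : Set (Fin N))ᶜ, (fun z : Fin N → Fin d → ℝ => z i) '' cube (L + r₁) y) ∪
      ⋃ i : Fin N, (fun z : Fin N → Fin d → ℝ => z i) '' cube (L + r₁) x) = ∅

/-- A pair of cubes `Λ_L(x)`, `Λ_L(y)` is separable if for some nonempty `J ⊆ {1,…,N}`,
either `Λ_L(y)` is `J`-separable from `Λ_L(x)` or `Λ_L(x)` is `J`-separable from `Λ_L(y)`. -/
def SeparablePair {N d : ℕ} (r₁ L : ℝ) (x y : Fin N → Fin d → ℝ) : Prop :=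
  ∃ J : Finset (Fin N), J.Nonempty ∧ (JSeparable r₁ L J x y ∨ JSeparable r₁ L J y x)

/-- The distance between two subsets of `ℝ^{Nd}` (infimum of pairwise distances). -/
noncomputable def setDist {N d : ℕ} (A B : Set (Fin N → Fin d → ℝ)) : ℝ :=
  sInf (Set.image2 dist A B)

/-- Projection of a cube (sup-norm ball) onto a coordinate is a ball. -/
lemma proj_cube {N d : ℕ} (u : Fin N → Fin d → ℝ) (i : Fin N) {r : ℝ} (hr : 0 < r) :
    (fun z : Fin N → Fin d → ℝ => z i) '' cube r u = Metric.ball (u i) r := by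
  ext v
  constructor
  · rintro ⟨z, hz, rfl⟩
    exact lt_of_le_of_lt (dist_le_pi_dist z u i) hz
  · intro hv
    refine ⟨Function.update u i v, ?_, ?_⟩
    · rw [cube, Metric.mem_ball, dist_pi_lt_iff hr]
      intro b
      rcases eq_or_ne b i with rfl | hb
      · simpa using hv
      · simpa [Function.update_of_ne hb] using hr
    · simp

/-- For any `L > 1` and any `x ∈ ℝ^{Nd}`, there are `K ≤ N^N` points
`x^{(1)}, …, x^{(K)}` such that any lattice point `y` outside
`∪_l Λ_{2N(L+r₁)}(x^{(l)})` with `dist(Λ_L(x), Λ_L(y)) > 2N(L+r₁)` gives a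
separable pair of cubes `Λ_L(x)`, `Λ_L(y)`. -/
theorem separability_covering (N d : ℕ) (hN : 1 ≤ N) (hd : 1 ≤ d)
    (r₁ : ℝ) (hr₁ : 0 ≤ r₁) (L : ℝ) (hL : 1 < L) (x : Fin N → Fin d → ℝ) :
    ∃ (K : ℕ), K ≤ N ^ N ∧ ∃ xc : Fin K → (Fin N → Fin d → ℝ),
      ∀ y : Fin N → Fin d → ℤ,
        (fun n i => (y n i : ℝ)) ∉ (⋃ l : Fin K, cube (2 * N * (L + r₁)) (xc l)) →
        setDist (cube L x) (cube L (fun n i => (y n i : ℝ))) > 2 * N * (L + r₁) →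
        SeparablePair r₁ L x (fun n i => (y n i : ℝ)) := by
  classical
  haveI : Nonempty (Fin N) := Fin.pos_iff_nonempty.mp hN
  set r : ℝ := L + r₁ with hr_def
  have hr : 0 < r := by simp only [hr_def]; linarith
  have hNR : (0:ℝ) < N := by exact_mod_cast hN
  refine ⟨N ^ N, le_refl _, ?_⟩
  have e : Fin (N ^ N) ≃ (Fin N → Fin N) :=
    Fintype.equivOfCardEq (by simp)
  refine ⟨fun l n => x (e l n), ?_⟩
  intro y hy _hdist
  set Y : Fin N → Fin d → ℝ := fun n i => (y n i : ℝ) with hY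
  -- Step 1: some coordinate of Y is `2Nr`-far from every coordinate of x.
  have h1 : ∃ n₀ : Fin N, ∀ i : Fin N, 2 * N * r ≤ dist (Y n₀) (x i) := by
    by_contra h
    push_neg at h
    choose τ hτ using h
    apply hy
    refine Set.mem_iUnion.2 ⟨e.symm τ, ?_⟩
    rw [cube, Metric.mem_ball, dist_pi_lt_iff (by positivity)]
    intro n
    simpa [e.apply_symm_apply] using hτ n
  obtain ⟨n₀, hn₀⟩ := h1
  -- the distance from Y a to the configuration x
  set g : Fin N → ℝ := fun a => Finset.univ.inf' Finset.univ_nonempty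
    (fun i => dist (Y a) (x i)) with hg
  have hg_le : ∀ a i, g a ≤ dist (Y a) (x i) := fun a i =>
    Finset.inf'_le _ (Finset.mem_univ i)
  have hg_ex : ∀ a, ∃ i, g a = dist (Y a) (x i) := by
    intro a
    obtain ⟨i, _, hi⟩ := Finset.exists_mem_eq_inf' Finset.univ_nonempty
      (fun i => dist (Y a) (x i))
    exact ⟨i, hi⟩
  have hg_tri : ∀ a b, g a ≤ g b + dist (Y a) (Y b) := by
    intro a b
    obtain ⟨i, hi⟩ := hg_ex b
    calc g a ≤ dist (Y a) (x i) := hg_le a i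
      _ ≤ dist (Y a) (Y b) + dist (Y b) (x i) := dist_triangle _ _ _
      _ = g b + dist (Y a) (Y b) := by rw [hi]; ring
  have hgn₀ : 2 * r * N ≤ g n₀ := by
    apply Finset.le_inf'
    intro i _
    have := hn₀ i
    linarith
  -- the chain of threshold sets
  set Jk : ℕ → Finset (Fin N) := fun k =>
    Finset.univ.filter fun a => 2 * r * k ≤ g a with hJk
  have hmem : ∀ (k : ℕ) (a : Fin N), a ∈ Jk k ↔ 2 * r * k ≤ g a := by
    intro k a; simp [hJk]
  have hmono : ∀ m k : ℕ, m ≤ k → Jk k ⊆ Jk m := by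
    intro m k hmk a ha
    rw [hmem] at ha ⊢
    have hmk' : (m:ℝ) ≤ k := by exact_mod_cast hmk
    nlinarith
  have hJN : n₀ ∈ Jk N := by rw [hmem]; exact hgn₀
  have key : ∃ k < N, Jk k = Jk (k + 1) := by
    by_contra h
    push_neg at h
    have hcard : ∀ k ≤ N, (Jk k).card + k ≤ N := by
      intro k hk
      induction k with
      | zero => simpa using Finset.card_le_univ (Jk 0)
      | succ k ih =>
        have h1 := ih (by omega)
        have hss : Jk (k + 1) ⊂ Jk k :=
          lt_of_le_of_ne (hmono k (k + 1) (Nat.le_succ _))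
            (fun heq => h k (by omega) heq.symm)
        have := Finset.card_lt_card hss
        omega
    have h2 := hcard N le_rfl
    have h3 : 0 < (Jk N).card := Finset.card_pos.2 ⟨n₀, hJN⟩
    omega
  obtain ⟨k, hkN, hkeq⟩ := key
  refine ⟨Jk (k + 1), ⟨n₀, hmono (k + 1) N hkN hJN⟩, Or.inl ?_⟩
  -- separability
  rw [JSeparable, Set.eq_empty_iff_forall_notMem]
  rintro p ⟨hp1, hp2⟩
  simp only [Set.mem_iUnion] at hp1
  obtain ⟨j, hjJ, hpj⟩ := hp1
  rw [show (L + r₁) = r from rfl, proj_cube _ _ hr, Metric.mem_ball] at hpj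
  have hgj : 2 * r * (k + 1 : ℕ) ≤ g j := (hmem _ _).1 hjJ
  push_cast at hgj
  rcases hp2 with hp2 | hp2
  · -- p in a projection of the y-cube outside J
    simp only [Set.mem_iUnion] at hp2
    obtain ⟨b, hbJ, hpb⟩ := hp2
    rw [show (L + r₁) = r from rfl, proj_cube _ _ hr, Metric.mem_ball] at hpb
    simp only [Set.mem_compl_iff, Finset.mem_coe] at hbJ
    rw [← hkeq] at hbJ
    have hgb : ¬ (2 * r * k ≤ g b) := fun hc => hbJ ((hmem _ _).2 hc)
    push_neg at hgb
    have hdYY : dist (Y j) (Y b) < 2 * r := by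
      calc dist (Y j) (Y b) ≤ dist p (Y j) + dist p (Y b) := dist_triangle_left _ _ _
        _ < r + r := by exact add_lt_add hpj hpb
        _ = 2 * r := by ring
    have := hg_tri j b
    nlinarith
  · -- p in a projection of the x-cube
    simp only [Set.mem_iUnion] at hp2
    obtain ⟨i, hpi⟩ := hp2
    rw [show (L + r₁) = r from rfl, proj_cube _ _ hr, Metric.mem_ball] at hpi
    have hdist : dist (Y j) (x i) < 2 * r := by
      calc dist (Y j) (x i) ≤ dist p (Y j) + dist p (x i) := dist_triangle_left _ _ _
        _ < r + r := add_lt_add hpj hpi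
        _ = 2 * r := by ring
    have := hg_le j i
    nlinarith
end

section
/- Assume L ≥ max(r₁, 1). For every x ∈ ℝ^{Nd} and every lattice point y ∈ ℤ^{Nd} with |y| > |x| + (4N+2)L, the pair of cubes Λ_L(x), Λ_L(y) is separable. -/
open Set Metric

lemma image_eval_ball {N d : ℕ} (j : Fin N) (u : Fin N → Fin d → ℝ) {r : ℝ} (hr : 0 < r) :
    (fun z : Fin N → Fin d → ℝ => z j) '' Metric.ball u r = Metric.ball (u j) r := by
  ext v
  constructor
  · rintro ⟨z, hz, rfl⟩
    exact lt_of_le_of_lt (dist_le_pi_dist z u j) hz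
  · intro hv
    refine ⟨Function.update u j v, ?_, by simp⟩
    rw [mem_ball, dist_pi_lt_iff hr]
    intro i
    rcases eq_or_ne i j with rfl | h
    · simpa using hv
    · simp [Function.update_of_ne h, hr]

lemma jSeparable_of_dist {N d : ℕ} {r₁ L : ℝ} (hR : 0 < L + r₁) (J : Finset (Fin N))
    (x Y : Fin N → Fin d → ℝ)
    (h1 : ∀ j ∈ J, ∀ i, i ∉ J → 2 * (L + r₁) ≤ dist (Y j) (Y i))
    (h2 : ∀ j ∈ J, ∀ i, 2 * (L + r₁) ≤ dist (Y j) (x i)) :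
    JSeparable r₁ L J x Y := by
  unfold JSeparable cube
  rw [Set.eq_empty_iff_forall_notMem]
  rintro p ⟨hp1, hp2⟩
  simp only [Set.mem_iUnion, Set.mem_compl_iff, Finset.mem_coe, Set.mem_union,
    image_eval_ball _ _ hR, mem_ball, exists_prop] at hp1 hp2
  obtain ⟨j, hj, hpj⟩ := hp1
  have key : ∀ w : Fin d → ℝ, 2 * (L + r₁) ≤ dist (Y j) w → ¬ dist p w < L + r₁ := by
    intro w hw hmem
    have ht := dist_triangle (Y j) p w
    rw [dist_comm (Y j) p] at ht
    linarith
  rcases hp2 with ⟨i, hi, hpi⟩ | ⟨i, hpi⟩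
  · exact key (Y i) (h1 j hj i hi) hpi
  · exact key (x i) (h2 j hj i) hpi


private lemma exists_good_J (N d : ℕ) (hN : 1 ≤ N)
    (r₁ : ℝ) (hr₁ : 0 ≤ r₁) (L : ℝ) (hL : max r₁ 1 ≤ L)
    (x Y : Fin N → Fin d → ℝ)
    (hfar : ‖Y‖ > ‖x‖ + (4 * N + 2) * L) :
    ∃ J : Finset (Fin N), J.Nonempty ∧
      (∀ j ∈ J, ∀ i, i ∉ J → 2 * (L + r₁) ≤ dist (Y j) (Y i)) ∧
      (∀ j ∈ J, ∀ i, 2 * (L + r₁) ≤ dist (Y j) (x i)) := by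
  have hr : r₁ ≤ L := le_trans (le_max_left _ _) hL
  have h1L : 1 ≤ L := le_trans (le_max_right _ _) hL
  have hR : 0 < L + r₁ := by linarith
  set c : ℝ := 2 * (L + r₁) with hc
  have hc0 : 0 < c := by positivity
  have hc4 : c ≤ 4 * L := by simp only [hc]; linarith
  clear_value c
  haveI : Nonempty (Fin N) := ⟨⟨0, hN⟩⟩
  obtain ⟨n₀, -, hn₀⟩ := Finset.exists_mem_eq_sup (Finset.univ : Finset (Fin N))
    Finset.univ_nonempty (fun n => ‖Y n‖₊)
  have hM : ‖Y‖ = ‖Y n₀‖ := by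
    rw [Pi.norm_def, hn₀, coe_nnnorm]
  have hle : ∀ n, ‖Y n‖ ≤ ‖Y‖ := fun n => norm_le_pi_norm Y n
  have hxi : ∀ i, ‖x i‖ ≤ ‖x‖ := fun i => norm_le_pi_norm x i
  have hdist : ∀ a b : Fin d → ℝ, ‖a‖ - ‖b‖ ≤ dist a b := by
    intro a b; rw [dist_eq_norm]; exact norm_sub_norm_le a b
  have hN1 : (1:ℝ) ≤ N := by exact_mod_cast hN
  have h6 : 6 * L ≤ (4 * N + 2) * L := by nlinarith
  by_cases hB : ∃ n₁, n₁ ≠ n₀ ∧ ‖Y‖ - c < ‖Y n₁‖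
  · -- Case B: pigeonhole gap argument
    obtain ⟨n₁, hne, hn₁⟩ := hB
    have hN2 : 2 ≤ N := by
      have := Fintype.one_lt_card_iff_nontrivial.mpr ⟨n₁, n₀, hne⟩
      simp at this; omega
    have hgap : ∃ k ∈ Finset.Icc 1 (N-1), ∀ n : Fin N,
        ¬(‖Y‖ - ((k:ℝ)+1)*c < ‖Y n‖ ∧ ‖Y n‖ ≤ ‖Y‖ - (k:ℝ)*c) := by
      by_contra hcon
      push_neg at hcon
      have hcon' : ∀ k ∈ Finset.Icc 1 (N-1), ∃ n : Fin N, n ≠ n₀ ∧ n ≠ n₁ ∧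
          ‖Y‖ - ((k:ℝ)+1)*c < ‖Y n‖ ∧ ‖Y n‖ ≤ ‖Y‖ - (k:ℝ)*c := by
        intro k hk
        obtain ⟨n, hn1, hn2⟩ := hcon k hk
        have hk1 : 1 ≤ k := (Finset.mem_Icc.mp hk).1
        have hk1' : (1:ℝ) ≤ k := by exact_mod_cast hk1
        refine ⟨n, ?_, ?_, hn1, hn2⟩
        · rintro rfl
          rw [← hM] at hn2
          nlinarith
        · rintro rfl
          nlinarith
      choose! f hf₀ hf₁ hfl hfu using hcon'
      have hmaps : ∀ k ∈ Finset.Icc 1 (N-1), f k ∈ Finset.univ \ {n₀, n₁} := by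
        intro k hk
        simp [Finset.mem_sdiff, hf₀ k hk, hf₁ k hk]
      have hinj : Set.InjOn f (Finset.Icc 1 (N-1)) := by
        intro a ha b hb hab
        by_contra hne'
        rcases Nat.lt_or_ge a b with h | h
        · have h1 : (a:ℝ) + 1 ≤ (b:ℝ) := by exact_mod_cast h
          have := hfl a ha
          have := hfu b hb
          rw [← hab] at this
          nlinarith
        · have hba : b < a := lt_of_le_of_ne h (Ne.symm hne')
          have h1 : (b:ℝ) + 1 ≤ (a:ℝ) := by exact_mod_cast hba
          have := hfl b hb
          have := hfu a ha
          rw [hab] at this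
          nlinarith
      have hcard := Finset.card_le_card_of_injOn f hmaps hinj
      have hc1 : (Finset.Icc 1 (N-1)).card = N - 1 := by
        rw [Nat.card_Icc]; omega
      have hc2 : (Finset.univ \ {n₀, n₁} : Finset (Fin N)).card = N - 2 := by
        rw [Finset.card_sdiff_of_subset (Finset.subset_univ _)]
        have : ({n₀, n₁} : Finset (Fin N)).card = 2 := by
          rw [Finset.card_insert_of_notMem (by simpa using hne.symm)]
          simp
        simp [this]
      rw [hc1, hc2] at hcard
      omega
    obtain ⟨k, hk, hkgap⟩ := hgap
    obtain ⟨hk1, hk2⟩ := Finset.mem_Icc.mp hk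
    have hkc : (k:ℝ) ≤ (N:ℝ) - 1 := by
      have : k + 1 ≤ N := by omega
      have := (Nat.cast_le (α := ℝ)).mpr this
      push_cast at this
      linarith
    have hk1' : (1:ℝ) ≤ k := by exact_mod_cast hk1
    have hkc4 : (k:ℝ) * c ≤ ((N:ℝ) - 1) * (4 * L) := by nlinarith
    refine ⟨Finset.univ.filter (fun n => ‖Y‖ - (k:ℝ)*c < ‖Y n‖), ⟨n₀, ?_⟩, ?_, ?_⟩
    · simp only [Finset.mem_filter, Finset.mem_univ, true_and]
      rw [← hM]
      nlinarith
    · intro j hj i hi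
      simp only [Finset.mem_filter, Finset.mem_univ, true_and, not_lt] at hj hi
      have hgi := hkgap i
      push_neg at hgi
      have : ‖Y i‖ ≤ ‖Y‖ - ((k:ℝ)+1)*c := by
        by_contra h'
        push_neg at h'
        exact absurd (hgi h') (not_lt.mpr hi)
      have := hdist (Y j) (Y i)
      nlinarith
    · intro j hj i
      simp only [Finset.mem_filter, Finset.mem_univ, true_and] at hj
      have := hdist (Y j) (x i)
      have := hxi i
      nlinarith
  · -- Case A: J = {n₀}
    push_neg at hB
    refine ⟨{n₀}, ⟨n₀, Finset.mem_singleton_self n₀⟩, ?_, ?_⟩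
    · intro j hj i hi
      rw [Finset.mem_singleton] at hj
      subst hj
      rw [Finset.mem_singleton] at hi
      have h1 := hB i hi
      have h2 := hdist (Y j) (Y i)
      rw [← hM] at h2
      linarith
    · intro j hj i
      rw [Finset.mem_singleton] at hj
      subst hj
      have h2 := hdist (Y j) (x i)
      have h3 := hxi i
      rw [← hM] at h2
      linarith

/-- If `L ≥ max(r₁, 1)`, then for every `x ∈ ℝ^{Nd}` and every lattice point
`y ∈ ℤ^{Nd}` with `|y| > |x| + (4N+2)L`, the pair of cubes `Λ_L(x)`, `Λ_L(y)`
is separable. -/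
theorem separable_of_far (N d : ℕ) (hN : 1 ≤ N) (hd : 1 ≤ d)
    (r₁ : ℝ) (hr₁ : 0 ≤ r₁) (L : ℝ) (hL : max r₁ 1 ≤ L)
    (x : Fin N → Fin d → ℝ) (y : Fin N → Fin d → ℤ)
    (hfar : ‖(fun n i => (y n i : ℝ) : Fin N → Fin d → ℝ)‖ > ‖x‖ + (4 * N + 2) * L) :
    SeparablePair r₁ L x (fun n i => (y n i : ℝ)) := by
  obtain ⟨J, hJne, h1, h2⟩ := exists_good_J N d hN r₁ hr₁ L hL x
    (fun n i => (y n i : ℝ)) hfar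
  have hr : r₁ ≤ L := le_trans (le_max_left _ _) hL
  have h1L : 1 ≤ L := le_trans (le_max_right _ _) hL
  have hR : 0 < L + r₁ := by linarith
  exact ⟨J, hJne, Or.inl (jSeparable_of_dist hR J x _ h1 h2)⟩
end

section
/- Assume N ≥ 2 and L ≥ max(r₁, 1). For every x ∈ ℝ^{Nd} and every lattice point y ∈ ℤ^{Nd} with |y| > |x| + 5NL, the pair of cubes Λ_L(x), Λ_L(y) is separable; in particular, any pair of cubes Λ_L(0), Λ_L(y) with y ∈ ℤ^{Nd} and |y| > 5NL is separable. -/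
open Set Metric

lemma eval_image_ball' {N d : ℕ} {R : ℝ} (hR : 0 < R) (u : Fin N → Fin d → ℝ) (i : Fin N) :
    (fun z : Fin N → Fin d → ℝ => z i) '' Metric.ball u R = Metric.ball (u i) R := by
  ext w
  constructor
  · rintro ⟨z, hz, rfl⟩
    exact mem_ball.mpr (lt_of_le_of_lt (dist_le_pi_dist z u i) (mem_ball.mp hz))
  · intro hw
    refine ⟨Function.update u i w, ?_, by simp⟩
    rw [mem_ball, dist_pi_lt_iff hR]
    intro n
    by_cases hn : n = i
    · subst hn; simpa using hw
    · simp [Function.update_of_ne hn, hR]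

lemma sep_aux {N d : ℕ} (hN : 2 ≤ N)
    {r₁ : ℝ} (hr₁ : 0 ≤ r₁) {L : ℝ} (hL : max r₁ 1 ≤ L)
    (x Y : Fin N → Fin d → ℝ) (hfar : ‖Y‖ > ‖x‖ + 5 * N * L) :
    SeparablePair r₁ L x Y := by
  classical
  have hL1 : (1:ℝ) ≤ L := le_trans (le_max_right _ _) hL
  have hrL : r₁ ≤ L := le_trans (le_max_left _ _) hL
  have hL0 : (0:ℝ) < L := lt_of_lt_of_le zero_lt_one hL1
  have hR0 : (0:ℝ) < L + r₁ := by linarith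
  set s : ℝ := 2 * (L + r₁) with hs_def
  have hs0 : 0 < s := by positivity
  have hs4 : s ≤ 4 * L := by simp only [hs_def]; linarith
  set v : Fin N → ℝ := fun j => ‖Y j‖ with hv_def
  have hN2 : (2:ℝ) ≤ (N:ℝ) := by exact_mod_cast hN
  have hsN : ‖x‖ + s * N ≤ ‖x‖ + 5 * N * L := by nlinarith
  -- a coordinate far out
  obtain ⟨j₀, hj₀⟩ : ∃ j₀, ‖x‖ + s * N ≤ v j₀ := by
    by_contra hcon
    push_neg at hcon
    have hpos : (0:ℝ) < ‖x‖ + s * N := by positivity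
    have : ‖Y‖ < ‖x‖ + s * N := (pi_norm_lt_iff hpos).mpr hcon
    linarith
  -- pigeonhole: a free interval
  obtain ⟨k, hk⟩ : ∃ k : Fin N, ∀ j : Fin N,
      ¬(‖x‖ + s * (k:ℝ) ≤ v j ∧ v j < ‖x‖ + s * (k:ℝ) + s) := by
    by_contra hcon
    push_neg at hcon
    choose g hg1 hg2 using hcon
    have hginj : Function.Injective g := by
      have key : ∀ a b : Fin N, g a = g b → (a:ℕ) < (b:ℕ) → False := by
        intro a b hab hlt
        have h1 := hg2 a
        rw [hab] at h1
        have h2 := hg1 b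
        have hcast : (a:ℝ) + 1 ≤ (b:ℝ) := by exact_mod_cast Nat.succ_le_of_lt hlt
        nlinarith
      intro a b hab
      rcases lt_trichotomy (a:ℕ) (b:ℕ) with h|h|h
      · exact (key a b hab h).elim
      · exact Fin.ext h
      · exact (key b a hab.symm h).elim
    obtain ⟨k, hgk⟩ := (Finite.injective_iff_surjective.mp hginj) j₀
    have h1 := hg2 k
    rw [hgk] at h1
    have hk1 : (k:ℝ) + 1 ≤ (N:ℝ) := by exact_mod_cast Nat.succ_le_of_lt k.isLt
    nlinarith
  set T : ℝ := ‖x‖ + s * (k:ℝ) with hT_def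
  have hkN : (k:ℝ) + 1 ≤ (N:ℝ) := by exact_mod_cast Nat.succ_le_of_lt k.isLt
  have hknn : (0:ℝ) ≤ (k:ℝ) := Nat.cast_nonneg _
  have hxT : ‖x‖ ≤ T := by nlinarith
  set J : Finset (Fin N) := Finset.univ.filter (fun j => T + s ≤ v j) with hJ_def
  have hj₀J : j₀ ∈ J := by
    simp only [hJ_def, Finset.mem_filter, Finset.mem_univ, true_and, hT_def]
    nlinarith
  refine ⟨J, ⟨j₀, hj₀J⟩, Or.inl ?_⟩
  rw [JSeparable, Set.eq_empty_iff_forall_notMem]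
  rintro p ⟨hp1, hp2⟩
  simp only [cube, eval_image_ball' hR0] at hp1 hp2
  simp only [Set.mem_iUnion, exists_prop] at hp1
  obtain ⟨j, hjJ, hpj⟩ := hp1
  have hvj : T + s ≤ v j := by
    have := (Finset.mem_filter.mp hjJ).2
    simpa using this
  rw [mem_ball] at hpj
  rcases hp2 with hp2 | hp2
  · simp only [Set.mem_iUnion, Set.mem_compl_iff, Finset.mem_coe, exists_prop] at hp2
    obtain ⟨i, hiJ, hpi⟩ := hp2
    rw [mem_ball] at hpi
    have hvi_lt : v i < T + s := by
      by_contra hcon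
      push_neg at hcon
      exact hiJ (by simp [hJ_def, hcon])
    have hvi : v i < T := by
      by_contra hcon
      push_neg at hcon
      exact hk i ⟨hcon, hvi_lt⟩
    have hd1 : dist (Y j) (Y i) < s := by
      calc dist (Y j) (Y i) ≤ dist (Y j) p + dist p (Y i) := dist_triangle _ _ _
        _ < (L + r₁) + (L + r₁) := by rw [dist_comm (Y j) p]; exact add_lt_add hpj hpi
        _ = s := by rw [hs_def]; ring
    have hd2 : s ≤ dist (Y j) (Y i) := by
      have := norm_sub_norm_le (Y j) (Y i)
      rw [dist_eq_norm]
      have h1 : v j = ‖Y j‖ := rfl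
      have h2 : v i = ‖Y i‖ := rfl
      linarith [hvj, hvi]
    linarith
  · simp only [Set.mem_iUnion] at hp2
    obtain ⟨i, hpi⟩ := hp2
    rw [mem_ball] at hpi
    have hd1 : dist (Y j) (x i) < s := by
      calc dist (Y j) (x i) ≤ dist (Y j) p + dist p (x i) := dist_triangle _ _ _
        _ < (L + r₁) + (L + r₁) := by rw [dist_comm (Y j) p]; exact add_lt_add hpj hpi
        _ = s := by rw [hs_def]; ring
    have hxi : ‖x i‖ ≤ ‖x‖ := norm_le_pi_norm x i
    have hd2 : s ≤ dist (Y j) (x i) := by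
      have := norm_sub_norm_le (Y j) (x i)
      rw [dist_eq_norm]
      have h1 : v j = ‖Y j‖ := rfl
      linarith [hvj, hxT]
    linarith

/-- Assume `N ≥ 2` and `L ≥ max(r₁, 1)`. For every `x ∈ ℝ^{Nd}` and every
lattice point `y ∈ ℤ^{Nd}` with `|y| > |x| + 5NL`, the pair of cubes
`Λ_L(x)`, `Λ_L(y)` is separable; in particular, any pair of cubes
`Λ_L(0)`, `Λ_L(y)` with `y ∈ ℤ^{Nd}` and `|y| > 5NL` is separable. -/
theorem separable_of_far_5NL (N d : ℕ) (hN : 2 ≤ N) (hd : 1 ≤ d)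
    (r₁ : ℝ) (hr₁ : 0 ≤ r₁) (L : ℝ) (hL : max r₁ 1 ≤ L) :
    (∀ (x : Fin N → Fin d → ℝ) (y : Fin N → Fin d → ℤ),
      ‖(fun n i => (y n i : ℝ) : Fin N → Fin d → ℝ)‖ > ‖x‖ + 5 * N * L →
      SeparablePair r₁ L x (fun n i => (y n i : ℝ))) ∧
    (∀ y : Fin N → Fin d → ℤ,
      ‖(fun n i => (y n i : ℝ) : Fin N → Fin d → ℝ)‖ > 5 * N * L →
      SeparablePair r₁ L (0 : Fin N → Fin d → ℝ) (fun n i => (y n i : ℝ))) := by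
  constructor
  · intro x y h
    exact sep_aux hN hr₁ hL x _ h
  · intro y h
    refine sep_aux hN hr₁ hL 0 _ ?_
    simpa using h
end

section
/- For all integers k ≥ 0 and i ≥ 0, the scale sequence satisfies L_{k+i} ≥ L_k · ⌊L_k^{(3/2)^i − 1}⌋. -/
open scoped Real

/-- The scale sequence: `L_0 = L₀` and `L_k = ⌊L_{k-1}^{3/2}⌋ + 1` for `k ≥ 1`. -/
noncomputable def scale (L₀ : ℕ) : ℕ → ℕ
  | 0 => L₀
  | k + 1 => ⌊(scale L₀ k : ℝ) ^ (3 / 2 : ℝ)⌋₊ + 1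

lemma scale_pos (L₀ : ℕ) (hL₀ : 2 ≤ L₀) (k : ℕ) : 1 ≤ scale L₀ k := by
  cases k with
  | zero => exact le_trans (by norm_num) hL₀
  | succ n => exact Nat.le_add_left 1 _

lemma scale_rpow (L₀ : ℕ) (hL₀ : 2 ≤ L₀) (k i : ℕ) :
    (scale L₀ k : ℝ) ^ ((3 / 2 : ℝ) ^ i) ≤ (scale L₀ (k + i) : ℝ) := by
  induction i with
  | zero => simp
  | succ n ih =>
    have hb : (0 : ℝ) ≤ (scale L₀ k : ℝ) := Nat.cast_nonneg _
    have h1 : (scale L₀ (k + n) : ℝ) ^ ((3 / 2 : ℝ)) ≤ (scale L₀ (k + n + 1) : ℝ) := by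
      show _ ≤ ((⌊(scale L₀ (k + n) : ℝ) ^ (3 / 2 : ℝ)⌋₊ + 1 : ℕ) : ℝ)
      push_cast
      exact le_of_lt (Nat.lt_floor_add_one _)
    calc (scale L₀ k : ℝ) ^ ((3 / 2 : ℝ) ^ (n + 1))
        = ((scale L₀ k : ℝ) ^ ((3 / 2 : ℝ) ^ n)) ^ ((3 / 2 : ℝ)) := by
          rw [pow_succ, Real.rpow_mul hb]
      _ ≤ (scale L₀ (k + n) : ℝ) ^ ((3 / 2 : ℝ)) := by
          apply Real.rpow_le_rpow (Real.rpow_nonneg hb _) ih (by norm_num)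
      _ ≤ (scale L₀ (k + n + 1) : ℝ) := h1

/-- For all `k, i ≥ 0`, the scale sequence satisfies
`L_{k+i} ≥ L_k · ⌊L_k^{(3/2)^i − 1}⌋`. -/
theorem scale_growth (L₀ : ℕ) (hL₀ : 2 ≤ L₀) (k i : ℕ) :
    (scale L₀ (k + i) : ℝ) ≥
      (scale L₀ k : ℝ) * (⌊(scale L₀ k : ℝ) ^ ((3 / 2 : ℝ) ^ i - 1)⌋₊ : ℝ) := by
  have hb : (0 : ℝ) < (scale L₀ k : ℝ) := by
    exact_mod_cast scale_pos L₀ hL₀ k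
  have hfloor : (⌊(scale L₀ k : ℝ) ^ ((3 / 2 : ℝ) ^ i - 1)⌋₊ : ℝ) ≤
      (scale L₀ k : ℝ) ^ ((3 / 2 : ℝ) ^ i - 1) :=
    Nat.floor_le (Real.rpow_nonneg hb.le _)
  calc (scale L₀ k : ℝ) * (⌊(scale L₀ k : ℝ) ^ ((3 / 2 : ℝ) ^ i - 1)⌋₊ : ℝ)
      ≤ (scale L₀ k : ℝ) * (scale L₀ k : ℝ) ^ ((3 / 2 : ℝ) ^ i - 1) := by
        exact mul_le_mul_of_nonneg_left hfloor hb.le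
    _ = (scale L₀ k : ℝ) ^ ((3 / 2 : ℝ) ^ i) := by
        rw [← Real.rpow_one_add' hb.le]
        · ring_nf
        · have : (1 : ℝ) ≤ (3 / 2 : ℝ) ^ i := one_le_pow₀ (by norm_num)
          intro h; linarith [h]
    _ ≤ (scale L₀ (k + i) : ℝ) := scale_rpow L₀ hL₀ k i
end

section
/- Let n ≥ 1, let (Φ_n)_{n∈S} be a countable orthonormal family in L²(ℝ^n), let P be the orthogonal projection onto the closed span of (Φ_n)_{n∈S} (so P Φ_n = Φ_n for all n), let A ⊆ ℝ^n be measurable, and suppose that ‖(1 − 1_A)Φ_n‖ ≤ 1/4 for every n ∈ S. Then the cardinality of S is at most 2 ∑_{i∈I} ⟨1_A P 1_A e_i, e_i⟩ for any Hilbert basis (e_i)_{i∈I} of L²(ℝ^n) (the sum taken in [0, ∞]). -/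
open MeasureTheory Set
open scoped ENNReal

/-- If `(Φ_n)_{n∈S}` is a countable orthonormal family in `L²(ℝⁿ)`, `P` is the
orthogonal projection onto its closed span (so `P Φ_n = Φ_n`), `χ` is multiplication
by the indicator of a measurable set `A`, and `‖(1 − χ)Φ_n‖ ≤ 1/4` for all `n`,
then `card S ≤ 2 ∑_i ⟨χ P χ e_i, e_i⟩` for any Hilbert basis `(e_i)` of `L²(ℝⁿ)`. -/
theorem card_le_trace_bound (n : ℕ) (hn : 1 ≤ n)
    {S : Type*} [Countable S]
    (Φ : S → Lp ℂ 2 (volume : Measure (Fin n → ℝ))) (hΦ : Orthonormal ℂ Φ)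
    (P : Lp ℂ 2 (volume : Measure (Fin n → ℝ)) →L[ℂ] Lp ℂ 2 (volume : Measure (Fin n → ℝ)))
    (hPsa : IsSelfAdjoint P) (hPidem : P.comp P = P)
    (hPrange : LinearMap.range (P : Lp ℂ 2 (volume : Measure (Fin n → ℝ)) →ₗ[ℂ]
        Lp ℂ 2 (volume : Measure (Fin n → ℝ)))
      = (Submodule.span ℂ (Set.range Φ)).topologicalClosure)
    (hPΦ : ∀ s : S, P (Φ s) = Φ s)
    (A : Set (Fin n → ℝ)) (hA : MeasurableSet A)
    (χ : Lp ℂ 2 (volume : Measure (Fin n → ℝ)) →L[ℂ] Lp ℂ 2 (volume : Measure (Fin n → ℝ)))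
    (hχ : ∀ g : Lp ℂ 2 (volume : Measure (Fin n → ℝ)),
      (χ g : (Fin n → ℝ) → ℂ) =ᵐ[volume] A.indicator (g : (Fin n → ℝ) → ℂ))
    (hout : ∀ s : S, ‖Φ s - χ (Φ s)‖ ≤ 1 / 4)
    {ι : Type*} (e : HilbertBasis ι ℂ (Lp ℂ 2 (volume : Measure (Fin n → ℝ)))) :
    (ENat.card S : ℝ≥0∞)
      ≤ 2 * ∑' i : ι, ENNReal.ofReal ((inner ℂ (χ (P (χ (e i)))) (e i) : ℂ).re) := by
  -- χ is symmetric
  have hχsa : ∀ f g : Lp ℂ 2 (volume : Measure (Fin n → ℝ)), (inner ℂ (χ f) g : ℂ) = inner ℂ f (χ g) := by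
    intro f g
    rw [MeasureTheory.L2.inner_def, MeasureTheory.L2.inner_def]
    apply integral_congr_ae
    filter_upwards [hχ f, hχ g] with a h1 h2
    rw [h1, h2]
    by_cases ha : a ∈ A
    · simp [Set.indicator_of_mem ha]
    · simp [Set.indicator_of_notMem ha]
  -- P is symmetric
  have hsym : ∀ f g : Lp ℂ 2 (volume : Measure (Fin n → ℝ)), (inner ℂ (P f) g : ℂ) = inner ℂ f (P g) :=
    ContinuousLinearMap.isSelfAdjoint_iff_isSymmetric.mp hPsa
  have hPP : ∀ x : Lp ℂ 2 (volume : Measure (Fin n → ℝ)), P (P x) = P x := by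
    intro x
    rw [← ContinuousLinearMap.comp_apply, hPidem]
  -- the trace terms
  have key : ∀ i : ι, ((inner ℂ (χ (P (χ (e i)))) (e i) : ℂ)).re = ‖P (χ (e i))‖ ^ 2 := by
    intro i
    have : (inner ℂ (χ (P (χ (e i)))) (e i) : ℂ) = (‖P (χ (e i))‖ : ℂ) ^ 2 := by
      calc (inner ℂ (χ (P (χ (e i)))) (e i) : ℂ)
          = inner ℂ (P (χ (e i))) (χ (e i)) := hχsa _ _
        _ = inner ℂ (P (P (χ (e i)))) (χ (e i)) := by rw [hPP]
        _ = inner ℂ (P (χ (e i))) (P (χ (e i))) := hsym _ _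
        _ = (‖P (χ (e i))‖ : ℂ) ^ 2 := inner_self_eq_norm_sq_to_K _
    rw [this, ← Complex.ofReal_pow, Complex.ofReal_re]
  -- moving operators in inner ℂ products
  have hswap : ∀ (s : S) (i : ι),
      (inner ℂ (Φ s) (P (χ (e i))) : ℂ) = inner ℂ (χ (Φ s)) (e i) := by
    intro s i
    calc (inner ℂ (Φ s) (P (χ (e i))) : ℂ)
        = inner ℂ (P (Φ s)) (χ (e i)) := (hsym _ _).symm
      _ = inner ℂ (Φ s) (χ (e i)) := by rw [hPΦ]
      _ = inner ℂ (χ (Φ s)) (e i) := (hχsa _ _).symm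
  -- Parseval for the Hilbert basis e
  have hparseval : ∀ x : Lp ℂ 2 (volume : Measure (Fin n → ℝ)), HasSum (fun i : ι => ‖(inner ℂ (e i) x : ℂ)‖ ^ 2) (‖x‖ ^ 2) := by
    intro x
    have h := (e.hasSum_inner_mul_inner x x).mapL Complex.reCLM
    have h1 : ∀ i : ι, Complex.reCLM ((inner ℂ x (e i) : ℂ) * inner ℂ (e i) x)
        = ‖(inner ℂ (e i) x : ℂ)‖ ^ 2 := by
      intro i
      have hz : (inner ℂ x (e i) : ℂ) * inner ℂ (e i) x
          = ((‖(inner ℂ (e i) x : ℂ)‖ : ℂ)) ^ 2 := by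
        rw [← inner_conj_symm x (e i), RCLike.conj_mul]; norm_cast
      simp only [Complex.reCLM_apply, hz, ← Complex.ofReal_pow, Complex.ofReal_re]
    have h2 : Complex.reCLM (inner ℂ x x : ℂ) = ‖x‖ ^ 2 := by
      simpa using inner_self_eq_norm_sq (𝕜 := ℂ) x
    rw [h2] at h
    have hfun : (fun i : ι => Complex.reCLM ((inner ℂ x (e i) : ℂ) * inner ℂ (e i) x))
        = fun i : ι => ‖(inner ℂ (e i) x : ℂ)‖ ^ 2 := funext h1
    rwa [hfun] at h
  -- lower bound on ‖χ Φ s‖²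
  have hnorm : ∀ s : S, (1 / 2 : ℝ) ≤ ‖χ (Φ s)‖ ^ 2 := by
    intro s
    have h1 : ‖Φ s‖ = 1 := hΦ.1 s
    have h2 := hout s
    have h3 : ‖Φ s‖ - ‖χ (Φ s)‖ ≤ ‖Φ s - χ (Φ s)‖ := norm_sub_norm_le _ _
    nlinarith [norm_nonneg (χ (Φ s))]
  -- main chain in ℝ≥0∞
  have card_eq : (ENat.card S : ℝ≥0∞) = ∑' _ : S, (1 : ℝ≥0∞) := by
    rcases finite_or_infinite S with hS | hS
    · haveI := Fintype.ofFinite S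
      rw [tsum_fintype, ENat.card_eq_coe_fintype_card]
      simp
    · rw [ENat.card_eq_top_of_infinite, ENNReal.tsum_const_eq_top_of_ne_zero one_ne_zero]
      simp
  have step1 : (ENat.card S : ℝ≥0∞) ≤ 2 * ∑' s : S, ENNReal.ofReal (‖χ (Φ s)‖ ^ 2) := by
    rw [card_eq, ← ENNReal.tsum_mul_left]
    apply ENNReal.tsum_le_tsum
    intro s
    have : (1 : ℝ≥0∞) = ENNReal.ofReal 2 * ENNReal.ofReal (1 / 2) := by
      rw [← ENNReal.ofReal_mul (by norm_num)]
      norm_num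
    rw [this]
    have h2 : (ENNReal.ofReal 2 : ℝ≥0∞) = 2 := by norm_num
    rw [h2]
    exact mul_le_mul_right (ENNReal.ofReal_le_ofReal (hnorm s)) 2
  have step2 : ∑' s : S, ENNReal.ofReal (‖χ (Φ s)‖ ^ 2)
      ≤ ∑' i : ι, ENNReal.ofReal (‖P (χ (e i))‖ ^ 2) := by
    calc ∑' s : S, ENNReal.ofReal (‖χ (Φ s)‖ ^ 2)
        = ∑' s : S, ∑' i : ι, ENNReal.ofReal (‖(inner ℂ (e i) (χ (Φ s)) : ℂ)‖ ^ 2) := by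
          apply tsum_congr; intro s
          rw [← (hparseval (χ (Φ s))).tsum_eq,
            ENNReal.ofReal_tsum_of_nonneg (fun i => sq_nonneg _) (hparseval (χ (Φ s))).summable]
      _ = ∑' i : ι, ∑' s : S, ENNReal.ofReal (‖(inner ℂ (e i) (χ (Φ s)) : ℂ)‖ ^ 2) :=
          ENNReal.tsum_comm
      _ ≤ ∑' i : ι, ENNReal.ofReal (‖P (χ (e i))‖ ^ 2) := by
          apply ENNReal.tsum_le_tsum
          intro i
          have hterm : ∀ s : S, ‖(inner ℂ (e i) (χ (Φ s)) : ℂ)‖ ^ 2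
              = ‖(inner ℂ (Φ s) (P (χ (e i))) : ℂ)‖ ^ 2 := by
            intro s
            rw [hswap s i, norm_inner_symm]
          calc ∑' s : S, ENNReal.ofReal (‖(inner ℂ (e i) (χ (Φ s)) : ℂ)‖ ^ 2)
              = ∑' s : S, ENNReal.ofReal (‖(inner ℂ (Φ s) (P (χ (e i))) : ℂ)‖ ^ 2) := by
                apply tsum_congr; intro s; rw [hterm s]
            _ = ENNReal.ofReal (∑' s : S, ‖(inner ℂ (Φ s) (P (χ (e i))) : ℂ)‖ ^ 2) :=
                (ENNReal.ofReal_tsum_of_nonneg (fun s => sq_nonneg _)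
                  (hΦ.inner_products_summable (P (χ (e i))))).symm
            _ ≤ ENNReal.ofReal (‖P (χ (e i))‖ ^ 2) :=
                ENNReal.ofReal_le_ofReal (hΦ.tsum_inner_products_le (P (χ (e i))))
  calc (ENat.card S : ℝ≥0∞)
      ≤ 2 * ∑' s : S, ENNReal.ofReal (‖χ (Φ s)‖ ^ 2) := step1
    _ ≤ 2 * ∑' i : ι, ENNReal.ofReal (‖P (χ (e i))‖ ^ 2) := by
        exact mul_le_mul_right step2 2
    _ = 2 * ∑' i : ι, ENNReal.ofReal ((inner ℂ (χ (P (χ (e i)))) (e i) : ℂ).re) := by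
        congr 1
        apply tsum_congr
        intro i
        rw [key i]
end
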